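/- Let (P_t) be a contraction semigroup on C_b(X) with generator L̄ defined via its resolvent, and let D ⊆ D(L̄) contain (λ − L̄)^{-1} E for some λ > 0 and a set E ⊆ C_b(X) that is π-dense in C_b(X) (every f ∈ C_b(X) is a pointwise limit of a uniformly bounded sequence from E). Then D is a π-core for L̄: for every φ ∈ D(L̄) there exist φ_n ∈ D with φ_n → φ and L̄φ_n → L̄φ pointwise, with sup_n (‖φ_n‖_∞ + ‖L̄φ_n‖_∞) < ∞. -/
import Mathlib


open Filter
open scoped BoundedContinuousFunction Topology

/-- if `D ⊆ D(L̄)` contains `(l − L̄)^{-1} E` for a π-dense set `E`, then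
`D` is a π-core for the generator `L̄`.  Here `Dom` is the domain of `L̄`, `R` is the
resolvent `(l − L̄)^{-1}`, which is bounded by `1/l`, inverts `l − L̄` on `Dom`, and maps
π-convergent sequences to π-convergent sequences (properties of the Laplace transform of
a Feller contraction semigroup). -/
theorem stmt_19 {X : Type*} [MetricSpace X]
    (Dom : Set (X →ᵇ ℝ)) (Lbar : (X →ᵇ ℝ) → (X →ᵇ ℝ))
    (l : ℝ) (hl : 0 < l) (R : (X →ᵇ ℝ) → (X →ᵇ ℝ))
    (hRmem : ∀ f, R f ∈ Dom)
    (hRres : ∀ f, l • R f - Lbar (R f) = f)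
    (hRinv : ∀ φ ∈ Dom, R (l • φ - Lbar φ) = φ)
    (hRbound : ∀ f, ‖R f‖ ≤ ‖f‖ / l)
    (hRpi : ∀ (fn : ℕ → (X →ᵇ ℝ)) (f : X →ᵇ ℝ),
      (∀ x, Tendsto (fun n => fn n x) atTop (𝓝 (f x))) →
      (∃ C : ℝ, ∀ n, ‖fn n‖ ≤ C) →
      ∀ x, Tendsto (fun n => R (fn n) x) atTop (𝓝 (R f x)))
    (E : Set (X →ᵇ ℝ))
    (hEdense : ∀ f : X →ᵇ ℝ, ∃ fn : ℕ → (X →ᵇ ℝ),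
      (∀ n, fn n ∈ E) ∧ (∃ C : ℝ, ∀ n, ‖fn n‖ ≤ C) ∧
        ∀ x, Tendsto (fun n => fn n x) atTop (𝓝 (f x)))
    (D : Set (X →ᵇ ℝ)) (hD : D ⊆ Dom)
    (hDE : ∀ e ∈ E, R e ∈ D) :
    ∀ φ ∈ Dom, ∃ φn : ℕ → (X →ᵇ ℝ),
      (∀ n, φn n ∈ D) ∧
      (∃ C : ℝ, ∀ n, ‖φn n‖ + ‖Lbar (φn n)‖ ≤ C) ∧
      (∀ x, Tendsto (fun n => φn n x) atTop (𝓝 (φ x))) ∧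
      (∀ x, Tendsto (fun n => Lbar (φn n) x) atTop (𝓝 (Lbar φ x))) := by

  intro φ hφ
  set f : X →ᵇ ℝ := l • φ - Lbar φ with hf
  obtain ⟨fn, hfnE, ⟨C, hC⟩, hfn⟩ := hEdense f
  refine ⟨fun n => R (fn n), fun n => hDE _ (hfnE n), ?_, ?_, ?_⟩
  · have hC0 : 0 ≤ C := le_trans (norm_nonneg _) (hC 0)
    refine ⟨C / l + 2 * C, fun n => ?_⟩
    have h1 : ‖R (fn n)‖ ≤ C / l :=
      le_trans (hRbound _) (by gcongr; exact hC n)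
    have h2 : Lbar (R (fn n)) = l • R (fn n) - fn n := by
      have := hRres (fn n); linear_combination (norm := abel) -this
    have h3 : ‖Lbar (R (fn n))‖ ≤ 2 * C := by
      rw [h2]
      calc ‖l • R (fn n) - fn n‖ ≤ ‖l • R (fn n)‖ + ‖fn n‖ := norm_sub_le _ _
        _ ≤ l * (C / l) + C := by
            refine add_le_add ?_ (hC n)
            have hns : ‖l • R (fn n)‖ = ‖l‖ * ‖R (fn n)‖ := norm_smul l (R (fn n))
            rw [hns, Real.norm_eq_abs, abs_of_pos hl]
            exact mul_le_mul_of_nonneg_left h1 hl.le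
        _ = 2 * C := by field_simp; ring
    linarith
  · have hRf : R f = φ := hRinv φ hφ
    intro x
    have := hRpi fn f hfn ⟨C, hC⟩ x
    rwa [hRf] at this
  · intro x
    have hRf : R f = φ := hRinv φ hφ
    have h2 : ∀ n, Lbar (R (fn n)) = l • R (fn n) - fn n := by
      intro n; have := hRres (fn n); linear_combination (norm := abel) -this
    have hφn := hRpi fn f hfn ⟨C, hC⟩ x
    rw [hRf] at hφn
    have key : Tendsto (fun n => l * R (fn n) x - fn n x) atTop (𝓝 (l * φ x - f x)) :=
      ((hφn.const_mul l).sub (hfn x))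
    have hLφ : l * φ x - f x = Lbar φ x := by
      simp [hf, BoundedContinuousFunction.sub_apply]
    rw [hLφ] at key
    convert key using 2 with n
    rw [h2 n]
    simp
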